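/- If a0 ≤ 0 or a1 ≤ 0, then there are no real numbers p1 > 0 and p2 with p2 - p1^2 > 0 satisfying 4*p1^2*a0 + p1^2*a1^2 - 2*p1*p2*a0*a1 - 2*p1*a1 - 2*p2*a0 + p2^2*a0^2 + 1 < 0. -/
import Mathlib

theorem stmt_7 (a0 a1 : ℝ) (h : a0 ≤ 0 ∨ a1 ≤ 0) :
    ¬ ∃ p1 p2 : ℝ, p1 > 0 ∧ p2 - p1^2 > 0 ∧
      4*p1^2*a0 + p1^2*a1^2 - 2*p1*p2*a0*a1 - 2*p1*a1 - 2*p2*a0 + p2^2*a0^2 + 1 < 0 := by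
  rintro ⟨p1, p2, hp1, hp2, hlt⟩
  rcases le_or_gt a0 0 with ha0 | ha0
  · nlinarith [sq_nonneg (p1*a1 - p2*a0 - 1), mul_nonneg (neg_nonneg.2 ha0) (le_of_lt hp2)]
  · have ha1 : a1 ≤ 0 := h.resolve_left (not_le.2 ha0)
    have hp2p : (0:ℝ) < p2 := lt_of_le_of_lt (sq_nonneg p1) (by linarith)
    have key : p1 - p2*a1 > 0 := by nlinarith [mul_nonneg hp2p.le (neg_nonneg.2 ha1)]
    nlinarith [sq_nonneg (p1*a1 + p2*a0 - 1), mul_nonneg (mul_nonneg hp1.le ha0.le) key.le]
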